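/- Let T_1, ..., T_k be commuting contractions on a finite-dimensional Hilbert space H with a unitary N-dilation on a space K of dimension m. Then there exist m points w^1, ..., w^m ∈ 𝕋^k and m positive semidefinite operators A_1, ..., A_m on H with ∑ A_i = I_H such that p(T_1, ..., T_k) = ∑_{i=1}^m p(w^i_1, ..., w^i_k) A_i for every polynomial p of total degree at most N. -/

import Mathlib

set_option maxHeartbeats 1000000

open ContinuousLinearMap
open scoped InnerProductSpace
lemma clm_pow_apply_eigen {E : Type*} [NormedAddCommGroup E] [NormedSpace ℂ E]
    (f : E →L[ℂ] E) (c : ℂ) (x : E) (hx : f x = c • x) (n : ℕ) : (f ^ n) x = c ^ n • x := by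
  induction n with
  | zero => simp
  | succ n ih =>
    rw [pow_succ, ContinuousLinearMap.mul_apply, hx, map_smul, ih, smul_smul, ← pow_succ']

lemma noncommProd_apply_eigen {ι E : Type*} [NormedAddCommGroup E] [NormedSpace ℂ E]
    (f : ι → (E →L[ℂ] E)) (c : ι → ℂ) (x : E) (hx : ∀ i, f i x = c i • x) (s : Finset ι) :
    ∀ (comm : (↑s : Set ι).Pairwise fun a b => Commute (f a) (f b)),
      s.noncommProd f comm x = (∏ i ∈ s, c i) • x := by
  induction s using Finset.cons_induction with
  | empty => intro comm; simp
  | cons a s ha ih =>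
    intro comm
    rw [Finset.noncommProd_cons, ContinuousLinearMap.mul_apply, ih, map_smul, hx, smul_smul,
      Finset.prod_cons, mul_comm]


lemma exists_joint_eigenbasis {K : Type} [NormedAddCommGroup K] [InnerProductSpace ℂ K]
    [FiniteDimensional ℂ K] {k : ℕ} (U : Fin k → (K →L[ℂ] K))
    (hU : ∀ i, U i ∈ unitary (K →L[ℂ] K)) (hUcomm : ∀ i j, Commute (U i) (U j)) :
    ∃ (e : OrthonormalBasis (Fin (Module.finrank ℂ K)) ℂ K)
      (w : Fin (Module.finrank ℂ K) → Fin k → ℂ),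
      ∀ a j, (U j) (e a) = w a j • e a := by
  classical
  have hstar : ∀ i j, Commute (U i) (star (U j)) := by
    intro i j
    have h1 : star (U j) * U j = 1 := (Unitary.mem_iff.mp (hU j)).1
    have h2 : U j * star (U j) = 1 := (Unitary.mem_iff.mp (hU j)).2
    show U i * star (U j) = star (U j) * U i
    calc U i * star (U j) = star (U j) * U j * (U i * star (U j)) := by rw [h1, one_mul]
      _ = star (U j) * (U j * U i * star (U j)) := by simp [mul_assoc]
      _ = star (U j) * (U i * (U j * star (U j))) := by rw [(hUcomm j i).eq, mul_assoc]
      _ = star (U j) * U i := by rw [h2, mul_one]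
  set S : Fin k × Bool → (K →L[ℂ] K) := fun p =>
    if p.2 then Complex.I • (U p.1 - star (U p.1)) else U p.1 + star (U p.1) with hSdef
  have hSfalse : ∀ j, S (j, false) = U j + star (U j) := fun j => rfl
  have hStrue : ∀ j, S (j, true) = Complex.I • (U j - star (U j)) := fun j => rfl
  have hScomm : ∀ p q, Commute (S p) (S q) := by
    rintro ⟨i, bi⟩ ⟨j, bj⟩
    have cU : Commute (S (i, bi)) (U j) := by
      cases bi
      · rw [hSfalse]; exact (hUcomm i j).add_left (hstar j i).symm
      · rw [hStrue]; exact ((hUcomm i j).sub_left (hstar j i).symm).smul_left Complex.I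
    have cUs : Commute (S (i, bi)) (star (U j)) := by
      cases bi
      · rw [hSfalse]; exact (hstar i j).add_left (hUcomm i j).star_star
      · rw [hStrue]; exact ((hstar i j).sub_left (hUcomm i j).star_star).smul_left Complex.I
    cases bj
    · rw [hSfalse]; exact cU.add_right cUs
    · rw [hStrue]; exact (cU.sub_right cUs).smul_right Complex.I
  have hSAdj : ∀ p, IsSelfAdjoint (S p) := by
    rintro ⟨j, b⟩
    cases b
    · rw [hSfalse]
      show star _ = _
      rw [star_add, star_star, add_comm]
    · rw [hStrue]
      show star _ = _
      rw [star_smul, star_sub, star_star, Complex.star_def, Complex.conj_I, neg_smul, smul_sub,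
        smul_sub, neg_sub]
  set SL : Fin k × Bool → Module.End ℂ K := fun p => (S p : K →ₗ[ℂ] K) with hSL
  have hSym : ∀ p, (SL p).IsSymmetric := fun p =>
    (ContinuousLinearMap.isSelfAdjoint_iff_isSymmetric).mp (hSAdj p)
  have hSLcomm : ∀ p q, Commute (SL p) (SL q) := by
    intro p q
    have h := (hScomm p q).eq
    exact LinearMap.ext fun x => by
      have := congrArg (fun (A : K →L[ℂ] K) => A x) h
      simpa [hSL, ContinuousLinearMap.mul_apply, Module.End.mul_apply] using this
  set V : ((Fin k × Bool) → ℂ) → Submodule ℂ K :=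
    fun χ => ⨅ p, Module.End.eigenspace (SL p) (χ p) with hV
  have hInt : DirectSum.IsInternal V :=
    LinearMap.IsSymmetric.LinearMap.IsSymmetric.directSum_isInternal_of_pairwise_commute
      hSym (fun p q _ => hSLcomm p q)
  have hOrth := LinearMap.IsSymmetric.orthogonalFamily_iInf_eigenspaces (T := SL) hSym
  have hind := hInt.submodule_iSupIndep
  have : Fintype {χ : (Fin k × Bool) → ℂ // V χ ≠ ⊥} := hind.fintypeNeBotOfFiniteDimensional
  have hVsup : ⨆ s : {χ : (Fin k × Bool) → ℂ // V χ ≠ ⊥}, V s.1 = ⊤ := by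
    have h0 := hInt.submodule_iSup_eq_top
    have h1 : (⨆ χ, V χ) ≤ ⨆ s : {χ : (Fin k × Bool) → ℂ // V χ ≠ ⊥}, V s.1 := by
      apply iSup_le
      intro χ
      by_cases h : V χ = ⊥
      · rw [h]; exact bot_le
      · exact le_iSup (fun s : {χ : (Fin k × Bool) → ℂ // V χ ≠ ⊥} => V s.1) ⟨χ, h⟩
    exact top_unique (h0 ▸ h1)
  have hInt' : DirectSum.IsInternal (fun s : {χ : (Fin k × Bool) → ℂ // V χ ≠ ⊥} => V s.1) :=
    DirectSum.isInternal_submodule_of_iSupIndep_of_iSup_eq_top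
      (hind.comp Subtype.val_injective) hVsup
  have hOrth' : OrthogonalFamily ℂ (fun s : {χ : (Fin k × Bool) → ℂ // V χ ≠ ⊥} => V s.1)
      (fun s => (V s.1).subtypeₗᵢ) := fun s t hst => hOrth (Subtype.coe_injective.ne hst)
  set e := hInt'.subordinateOrthonormalBasis rfl hOrth' with he
  set χf : Fin (Module.finrank ℂ K) → ((Fin k × Bool) → ℂ) :=
    fun a => (hInt'.subordinateOrthonormalBasisIndex rfl a hOrth').1 with hχf
  have hmem : ∀ a, e a ∈ V (χf a) := fun a =>
    hInt'.subordinateOrthonormalBasis_subordinate rfl a hOrth'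
  have hSe : ∀ a p, S p (e a) = χf a p • e a := by
    intro a p
    have := (Submodule.mem_iInf _).mp (hmem a) p
    exact Module.End.mem_eigenspace_iff.mp this
  refine ⟨e, fun a j => (2:ℂ)⁻¹ * (χf a (j, false) - Complex.I * χf a (j, true)), ?_⟩
  intro a j
  have hadd : U j (e a) + star (U j) (e a) = χf a (j, false) • e a := by
    have := hSe a (j, false); rwa [hSfalse, ContinuousLinearMap.add_apply] at this
  have hsub' : Complex.I • (U j (e a) - star (U j) (e a)) = χf a (j, true) • e a := by
    have := hSe a (j, true)
    rwa [hStrue, ContinuousLinearMap.smul_apply, ContinuousLinearMap.sub_apply] at this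
  have hsub : U j (e a) - star (U j) (e a) = (-Complex.I * χf a (j, true)) • e a := by
    have := congrArg (fun v => (-Complex.I) • v) hsub'
    simpa [smul_smul, neg_mul, Complex.I_mul_I] using this
  have h2 : (2:ℂ) • U j (e a) = (χf a (j, false) - Complex.I * χf a (j, true)) • e a := by
    calc (2:ℂ) • U j (e a)
        = (U j (e a) + star (U j) (e a)) + (U j (e a) - star (U j) (e a)) := by
          rw [two_smul]; abel
      _ = χf a (j, false) • e a + (-Complex.I * χf a (j, true)) • e a := by rw [hadd, hsub]
      _ = (χf a (j, false) - Complex.I * χf a (j, true)) • e a := by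
          rw [← add_smul]; congr 1; ring
  have h4 := congrArg (fun v : K => (2:ℂ)⁻¹ • v) h2
  simp only [smul_smul] at h4
  rwa [show (2:ℂ)⁻¹ * 2 = 1 by norm_num, one_smul] at h4

/-- Evaluation of a multivariate polynomial at a commuting tuple of operators. -/
noncomputable def mvPolyEvalCLM {H : Type} [NormedAddCommGroup H] [InnerProductSpace ℂ H]
    {k : ℕ} (T : Fin k → (H →L[ℂ] H)) (hT : ∀ i j, Commute (T i) (T j))
    (p : MvPolynomial (Fin k) ℂ) : H →L[ℂ] H :=
  ∑ d ∈ p.support, p.coeff d •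
    Finset.univ.noncommProd (fun i => (T i) ^ (d i))
      (fun i _ j _ _ => (hT i j).pow_pow (d i) (d j))

/-- Let `T₁, …, T_k` be commuting contractions on a finite-dimensional Hilbert space `H`
with a unitary `N`-dilation on a space `K` of dimension `m`. Then there exist `m` points
`w¹, …, wᵐ` on the `k`-torus and `m` positive operators `A₁, …, A_m` on `H` summing to
the identity, such that `p(T₁, …, T_k) = ∑ᵢ p(wⁱ) Aᵢ` for every polynomial `p` of total
degree at most `N`. -/
theorem N_dilation_convex_decomposition
    (H K : Type)
    [NormedAddCommGroup H] [InnerProductSpace ℂ H] [FiniteDimensional ℂ H]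
    [NormedAddCommGroup K] [InnerProductSpace ℂ K] [FiniteDimensional ℂ K]
    (k N : ℕ) (T : Fin k → (H →L[ℂ] H)) (hT : ∀ i, ‖T i‖ ≤ 1)
    (hTcomm : ∀ i j, Commute (T i) (T j))
    (W : H →ₗᵢ[ℂ] K)
    (U : Fin k → (K →L[ℂ] K)) (hU : ∀ i, U i ∈ unitary (K →L[ℂ] K))
    (hUcomm : ∀ i j, Commute (U i) (U j))
    (hdil : ∀ m : Fin k → ℕ, (∑ i, m i) ≤ N →
      ∀ h : H,
        adjoint W.toContinuousLinearMap
          ((Finset.univ.noncommProd (fun i => (U i) ^ (m i))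
              (fun i _ j _ _ => (hUcomm i j).pow_pow (m i) (m j))) (W h)) =
        (Finset.univ.noncommProd (fun i => (T i) ^ (m i))
            (fun i _ j _ _ => (hTcomm i j).pow_pow (m i) (m j))) h) :
    ∃ (w : Fin (Module.finrank ℂ K) → Fin k → ℂ) (A : Fin (Module.finrank ℂ K) → (H →L[ℂ] H)),
      (∀ i j, ‖w i j‖ = 1) ∧
      (∀ i, (A i).IsPositive) ∧
      (∑ i, A i) = 1 ∧
      ∀ p : MvPolynomial (Fin k) ℂ, p.totalDegree ≤ N →
        mvPolyEvalCLM T hTcomm p = ∑ i, MvPolynomial.eval (w i) p • A i := by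
  classical
  obtain ⟨e, w, hew⟩ := exists_joint_eigenbasis U hU hUcomm
  set WC := W.toContinuousLinearMap with hWC
  have hWW : adjoint WC ∘L WC = 1 :=
    (ContinuousLinearMap.norm_map_iff_adjoint_comp_self WC).mp (fun x => W.norm_map x)
  set P : Fin (Module.finrank ℂ K) → (K →L[ℂ] K) :=
    fun a => ContinuousLinearMap.toSpanSingleton ℂ (e a) ∘L innerSL ℂ (e a) with hP
  have hPapp : ∀ a x, P a x = ⟪e a, x⟫_ℂ • e a := fun a x => rfl
  set A : Fin (Module.finrank ℂ K) → (H →L[ℂ] H) :=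
    fun a => adjoint WC ∘L (P a ∘L WC) with hA
  have hAapp : ∀ a h, A a h = ⟪e a, (W h : K)⟫_ℂ • adjoint WC (e a) := by
    intro a h
    show adjoint WC (P a (WC h)) = _
    rw [hPapp, map_smul]
    rfl
  have hmono : ∀ (d : Fin k → ℕ), (∑ i, d i) ≤ N →
      (Finset.univ.noncommProd (fun i => (T i) ^ (d i))
        (fun i _ j _ _ => (hTcomm i j).pow_pow (d i) (d j))) =
      ∑ a, (∏ j, w a j ^ d j) • A a := by
    intro d hd
    ext h
    have hQe : ∀ a, (Finset.univ.noncommProd (fun i => (U i) ^ (d i))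
        (fun i _ j _ _ => (hUcomm i j).pow_pow (d i) (d j))) (e a)
        = (∏ j, w a j ^ d j) • e a := fun a =>
      noncommProd_apply_eigen _ _ _
        (fun i => clm_pow_apply_eigen (U i) (w a i) (e a) (hew a i) (d i)) Finset.univ _
    rw [ContinuousLinearMap.sum_apply, ← hdil d hd h]
    have h1 : (Finset.univ.noncommProd (fun i => (U i) ^ (d i))
        (fun i _ j _ _ => (hUcomm i j).pow_pow (d i) (d j))) (W h)
        = ∑ a, ⟪e a, (W h : K)⟫_ℂ • ((∏ j, w a j ^ d j) • e a) := by
      conv_lhs => rw [← e.sum_repr' (W h)]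
      rw [map_sum]
      simp only [map_smul, hQe]
    rw [h1, map_sum]
    refine Finset.sum_congr rfl fun a _ => ?_
    rw [map_smul, map_smul, ContinuousLinearMap.smul_apply, hAapp, smul_comm]
  refine ⟨w, A, ?_, ?_, ?_, ?_⟩
  · intro a j
    have h1 : ‖U j (e a)‖ = ‖e a‖ := (U j).norm_map_of_mem_unitary (hU j) (e a)
    have h2 : ‖e a‖ = 1 := e.orthonormal.1 a
    rw [hew a j, norm_smul, h2] at h1
    simpa using h1
  · intro a
    have hPpos : (P a).IsPositive := by
      constructor
      · intro x y
        show ⟪P a x, y⟫_ℂ = ⟪x, P a y⟫_ℂ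
        rw [hPapp, hPapp, inner_smul_left, inner_smul_right, inner_conj_symm]
        ring
      · intro x
        rw [ContinuousLinearMap.reApplyInnerSelf_apply, hPapp, inner_smul_left, mul_comm,
          Complex.mul_conj]
        simpa using Complex.normSq_nonneg ⟪e a, x⟫_ℂ
    exact hPpos.adjoint_conj WC
  · ext h
    rw [ContinuousLinearMap.sum_apply, ContinuousLinearMap.one_apply]
    have h1 : ∑ a, A a h = adjoint WC (∑ a, P a (WC h)) := by
      rw [map_sum]
      rfl
    have h2 : ∑ a, P a (WC h) = WC h := by
      simp only [hPapp]
      exact e.sum_repr' (WC h)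
    rw [h1, h2]
    simpa using ContinuousLinearMap.ext_iff.mp hWW h
  · intro p hp
    have hsum : ∀ d ∈ p.support, (∑ i, (d : Fin k → ℕ) i) ≤ N := by
      intro d hdsup
      have h1 := MvPolynomial.le_totalDegree hdsup
      have h2 : (∑ i, d i) = d.sum fun _ e => e := (Finsupp.sum_fintype d (fun _ e => e) (fun _ => rfl)).symm
      omega
    calc mvPolyEvalCLM T hTcomm p
        = ∑ d ∈ p.support, p.coeff d • ∑ a, (∏ j, w a j ^ d j) • A a := by
          unfold mvPolyEvalCLM
          exact Finset.sum_congr rfl fun d hd => by rw [hmono d (hsum d hd)]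
      _ = ∑ a, ∑ d ∈ p.support, (p.coeff d * ∏ j, w a j ^ d j) • A a := by
          simp_rw [Finset.smul_sum, smul_smul]
          exact Finset.sum_comm
      _ = ∑ a, MvPolynomial.eval (w a) p • A a := by
          refine Finset.sum_congr rfl fun a _ => ?_
          rw [MvPolynomial.eval_eq', ← Finset.sum_smul]
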